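/- Let N ≥ 1, let Q be a real symmetric N×N matrix with Q𝟙 = 0 (𝟙 ∈ ℝ^N the all-ones vector), let λ₂ > 0 satisfy vᵀQv ≥ λ₂‖v‖² for every v ∈ ℝ^N with 𝟙ᵀv = 0, and let λ_max ≥ 0 satisfy ‖Qv‖ ≤ λ_max‖v‖ for every v ∈ ℝ^N. Let H = I_N − (1/N)𝟙𝟙ᵀ, let κ > 0, R ≥ 0, σ ≥ 0, ε > 0. Let r : ℝ → ℝ^N be continuously differentiable with |ṙ_i(t)| ≤ R for every i and t ≥ 0, let u : ℝ → ℝ^N be continuous with |u_i(t)| ≤ σ·η_i(t) + ε for some functions η_i : [0,∞) → [0,1], and let x : ℝ → ℝ^N be differentiable with ẋ(t) = H·ṙ(t) − κQ·x(t) − κQ·u(t) and H·x(t) = x(t) for all t ≥ 0. Then for every t ≥ 0, ‖x(t)‖ ≤ exp(−κλ₂t)·‖x(0)‖ + (λ_max/λ₂)·√N·(σ + ε) + √N·R/(κλ₂). -/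

import Mathlib

open Set

/-- The action of a matrix on Euclidean space (matrix-vector product, with the
Euclidean norm on vectors). -/
noncomputable def euclMulVec {N : ℕ} (M : Matrix (Fin N) (Fin N) ℝ)
    (v : EuclideanSpace ℝ (Fin N)) : EuclideanSpace ℝ (Fin N) :=
  Matrix.toEuclideanCLM (𝕜 := ℝ) M v

lemma euclMulVec_apply' {n : ℕ} (M : Matrix (Fin n) (Fin n) ℝ) (v : EuclideanSpace ℝ (Fin n))
    (i : Fin n) : euclMulVec M v i = ∑ j, M i j * v j := rfl

lemma inner_eq_sum' {n : ℕ} (v w : EuclideanSpace ℝ (Fin n)) :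
    (inner ℝ v w : ℝ) = ∑ i, v i * w i := by
  simp [PiLp.inner_apply, RCLike.inner_apply, mul_comm]

lemma norm_le_sqrt_mul' {n : ℕ} (v : EuclideanSpace ℝ (Fin n)) (c : ℝ) (hc : 0 ≤ c)
    (h : ∀ i, |v i| ≤ c) : ‖v‖ ≤ Real.sqrt n * c := by
  rw [EuclideanSpace.norm_eq]
  have h1 : ∑ i, ‖v i‖ ^ 2 ≤ ∑ _i : Fin n, c ^ 2 := by
    apply Finset.sum_le_sum
    intro i _
    have := h i
    rw [Real.norm_eq_abs]
    nlinarith [abs_nonneg (v i)]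
  calc Real.sqrt (∑ i, ‖v i‖ ^ 2) ≤ Real.sqrt (∑ _i : Fin n, c ^ 2) := Real.sqrt_le_sqrt h1
    _ = Real.sqrt n * c := by
        rw [Finset.sum_const, Finset.card_univ, Fintype.card_fin, nsmul_eq_mul,
          Real.sqrt_mul (by positivity), Real.sqrt_sq hc]

lemma euclMulVec_proj_apply {n : ℕ} (v : EuclideanSpace ℝ (Fin n)) (i : Fin n) :
    euclMulVec (1 - (n : ℝ)⁻¹ • Matrix.of (fun _ _ => (1 : ℝ))) v i
      = v i - (n : ℝ)⁻¹ * ∑ j, v j := by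
  rw [euclMulVec_apply']
  simp [Matrix.sub_apply, Matrix.one_apply, sub_mul, Finset.sum_sub_distrib,
    Finset.mul_sum, ite_mul]

set_option maxHeartbeats 1000000 in
/-- NN-ETM particularization of Theorem 2: with communication mismatches bounded
by the NN-ETM thresholds `|u_i(t)| ≤ σ·η_i(t) + ε`, `η_i(t) ∈ [0,1]`, the
disagreement of the linear dynamic consensus protocol satisfies
`‖x(t)‖ ≤ e^{−κλ₂t}‖x(0)‖ + (λ_max/λ₂)·√N·(σ+ε) + √N·R/(κλ₂)`. -/
theorem stmt_11 (N : ℕ) (hN : 1 ≤ N)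
    (Q : Matrix (Fin N) (Fin N) ℝ) (hQsymm : Q.IsSymm)
    (hQone : Q.mulVec (fun _ => (1 : ℝ)) = 0)
    (lam2 lamMax : ℝ) (hlam2 : 0 < lam2) (hlamMax : 0 ≤ lamMax)
    (hQquad : ∀ v : EuclideanSpace ℝ (Fin N), (∑ i, v i) = 0 →
      lam2 * ‖v‖ ^ 2 ≤ ∑ i, v i * Q.mulVec (fun j => v j) i)
    (hQbound : ∀ v : EuclideanSpace ℝ (Fin N), ‖euclMulVec Q v‖ ≤ lamMax * ‖v‖)
    (H : Matrix (Fin N) (Fin N) ℝ)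
    (hH : H = 1 - (N : ℝ)⁻¹ • Matrix.of (fun _ _ => (1 : ℝ)))
    (κ R σ ε : ℝ) (hκ : 0 < κ) (hR : 0 ≤ R) (hσ : 0 ≤ σ) (hε : 0 < ε)
    (r r' : ℝ → EuclideanSpace ℝ (Fin N))
    (hr : ∀ t, HasDerivAt r (r' t) t) (hr'cont : Continuous r')
    (hr'bdd : ∀ i : Fin N, ∀ t, 0 ≤ t → |r' t i| ≤ R)
    (u : ℝ → EuclideanSpace ℝ (Fin N)) (hu : Continuous u)
    (η : Fin N → ℝ → ℝ)
    (hη : ∀ i : Fin N, ∀ t, 0 ≤ t → η i t ∈ Icc (0 : ℝ) 1)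
    (hubound : ∀ i : Fin N, ∀ t, 0 ≤ t → |u t i| ≤ σ * η i t + ε)
    (x : ℝ → EuclideanSpace ℝ (Fin N))
    (hx : ∀ t, 0 ≤ t → HasDerivAt x
      (euclMulVec H (r' t) - κ • euclMulVec Q (x t) - κ • euclMulVec Q (u t)) t)
    (hHx : ∀ t, 0 ≤ t → euclMulVec H (x t) = x t) :
    ∀ t, 0 ≤ t →
      ‖x t‖ ≤ Real.exp (-(κ * lam2 * t)) * ‖x 0‖
        + (lamMax / lam2) * (Real.sqrt N * (σ + ε))
        + Real.sqrt N * R / (κ * lam2) := by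
  intro t ht
  set a : ℝ := κ * lam2 with ha_def
  have ha : 0 < a := mul_pos hκ hlam2
  set C : ℝ := Real.sqrt N * R + κ * (lamMax * (Real.sqrt N * (σ + ε))) with hC_def
  have hC : 0 ≤ C := by positivity
  -- derivative abbreviation
  set D : ℝ → EuclideanSpace ℝ (Fin N) :=
    fun s => euclMulVec H (r' s) - κ • euclMulVec Q (x s) - κ • euclMulVec Q (u s) with hD_def
  -- sum of the coordinates of x is zero
  have hsum : ∀ s, 0 ≤ s → (∑ i, x s i) = 0 := by
    intro s hs
    have h1 := hHx s hs
    have i0 : Fin N := ⟨0, hN⟩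
    have h2 : euclMulVec H (x s) i0 = x s i0 := congrArg (fun v => v i0) h1
    rw [hH, euclMulVec_proj_apply] at h2
    have hNpos : (0 : ℝ) < N := by exact_mod_cast hN
    have h3 : (N : ℝ)⁻¹ * ∑ j, x s j = 0 := by linarith
    have h4 : (N : ℝ)⁻¹ ≠ 0 := by positivity
    exact (mul_eq_zero.mp h3).resolve_left h4
  -- bound on ‖r'‖
  have hr'norm : ∀ s, 0 ≤ s → ‖r' s‖ ≤ Real.sqrt N * R := fun s hs =>
    norm_le_sqrt_mul' _ R hR (fun i => hr'bdd i s hs)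
  -- bound on ‖u‖
  have hunorm : ∀ s, 0 ≤ s → ‖u s‖ ≤ Real.sqrt N * (σ + ε) := by
    intro s hs
    apply norm_le_sqrt_mul' _ _ (by positivity)
    intro i
    have h1 := hubound i s hs
    have h2 := (hη i s hs).2
    nlinarith
  -- the key inner product estimate
  have hinner : ∀ s, 0 ≤ s →
      (inner ℝ (x s) (D s) : ℝ) ≤ -(a * ‖x s‖ ^ 2) + C * ‖x s‖ := by
    intro s hs
    have e1 : (inner ℝ (x s) (D s) : ℝ)
        = inner ℝ (x s) (euclMulVec H (r' s))
          - κ * inner ℝ (x s) (euclMulVec Q (x s))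
          - κ * inner ℝ (x s) (euclMulVec Q (u s)) := by
      rw [hD_def]
      simp only [inner_sub_right, real_inner_smul_right]
    -- first term
    have t1 : (inner ℝ (x s) (euclMulVec H (r' s)) : ℝ) ≤ Real.sqrt N * R * ‖x s‖ := by
      have e2 : (inner ℝ (x s) (euclMulVec H (r' s)) : ℝ) = inner ℝ (x s) (r' s) := by
        rw [inner_eq_sum', inner_eq_sum', hH]
        simp_rw [euclMulVec_proj_apply, mul_sub, Finset.sum_sub_distrib]
        have : ∑ i, x s i * ((N : ℝ)⁻¹ * ∑ j, r' s j)
            = (∑ i, x s i) * ((N : ℝ)⁻¹ * ∑ j, r' s j) := (Finset.sum_mul _ _ _).symm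
        rw [this, hsum s hs, zero_mul, sub_zero]
      rw [e2]
      calc (inner ℝ (x s) (r' s) : ℝ) ≤ ‖x s‖ * ‖r' s‖ := real_inner_le_norm _ _
        _ ≤ ‖x s‖ * (Real.sqrt N * R) := by
            exact mul_le_mul_of_nonneg_left (hr'norm s hs) (norm_nonneg _)
        _ = Real.sqrt N * R * ‖x s‖ := by ring
    -- second term
    have t2 : lam2 * ‖x s‖ ^ 2 ≤ (inner ℝ (x s) (euclMulVec Q (x s)) : ℝ) := by
      rw [inner_eq_sum']
      exact hQquad (x s) (hsum s hs)
    -- third term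
    have t3 : |(inner ℝ (x s) (euclMulVec Q (u s)) : ℝ)|
        ≤ lamMax * (Real.sqrt N * (σ + ε)) * ‖x s‖ := by
      calc |(inner ℝ (x s) (euclMulVec Q (u s)) : ℝ)| ≤ ‖x s‖ * ‖euclMulVec Q (u s)‖ :=
            abs_real_inner_le_norm _ _
        _ ≤ ‖x s‖ * (lamMax * ‖u s‖) :=
            mul_le_mul_of_nonneg_left (hQbound (u s)) (norm_nonneg _)
        _ ≤ ‖x s‖ * (lamMax * (Real.sqrt N * (σ + ε))) := by
            apply mul_le_mul_of_nonneg_left _ (norm_nonneg _)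
            exact mul_le_mul_of_nonneg_left (hunorm s hs) hlamMax
        _ = lamMax * (Real.sqrt N * (σ + ε)) * ‖x s‖ := by ring
    have t3' := abs_le.mp t3
    rw [e1, ha_def, hC_def]
    nlinarith [t3'.1, t3'.2, hκ.le]
  -- continuity of x on [0, ∞)
  have hxcont : ContinuousOn x (Ici 0) := fun s hs =>
    ((hx s hs).continuousAt).continuousWithinAt
  -- the ε-δ wrapper
  apply le_of_forall_pos_le_add
  intro δ hδ
  -- auxiliary functions
  set φ : ℝ → ℝ := fun s => Real.exp (2 * a * s) * ‖x s‖ ^ 2 with hφ_def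
  have hφ_nonneg : ∀ s, 0 ≤ φ s := fun s => by positivity
  have hφδ_pos : ∀ s, 0 < φ s + δ ^ 2 := fun s => by positivity
  set h : ℝ → ℝ := fun s => Real.sqrt (φ s + δ ^ 2) with hh_def
  set F : ℝ → ℝ := fun s => C / a * Real.exp (a * s) - h s with hF_def
  -- derivative of φ
  have hφ' : ∀ s, 0 ≤ s → HasDerivAt φ
      (Real.exp (2 * a * s) * (2 * a) * ‖x s‖ ^ 2
        + Real.exp (2 * a * s) * (2 * inner ℝ (x s) (D s))) s := by
    intro s hs
    have hx2 : HasDerivAt (fun s => ‖x s‖ ^ 2) (2 * inner ℝ (x s) (D s)) s := by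
      have h1 := HasDerivAt.inner ℝ (hx s hs) (hx s hs)
      simp_rw [real_inner_self_eq_norm_sq] at h1
      rw [hD_def]
      refine h1.congr_deriv ?_
      rw [two_mul]
      congr 1
      exact real_inner_comm _ _
    have he : HasDerivAt (fun s => Real.exp (2 * a * s)) (Real.exp (2 * a * s) * (2 * a)) s := by
      have := ((hasDerivAt_id s).const_mul (2 * a)).exp
      simpa [mul_one] using this
    exact he.mul hx2
  -- derivative bound for F
  have hF' : ∀ s ∈ interior (Ici (0 : ℝ)),
      HasDerivWithinAt F
        (C / a * (Real.exp (a * s) * a)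
          - (Real.exp (2 * a * s) * (2 * a) * ‖x s‖ ^ 2
              + Real.exp (2 * a * s) * (2 * inner ℝ (x s) (D s)))
            / (2 * Real.sqrt (φ s + δ ^ 2))) (interior (Ici (0 : ℝ))) s := by
    intro s hs
    rw [interior_Ici] at hs
    have hs' : (0 : ℝ) ≤ s := le_of_lt hs
    have hb : HasDerivAt (fun s => C / a * Real.exp (a * s)) (C / a * (Real.exp (a * s) * a)) s := by
      have := ((hasDerivAt_id s).const_mul a).exp
      simp only [mul_one] at this
      exact this.const_mul (C / a)
    have hhs : HasDerivAt h
        ((Real.exp (2 * a * s) * (2 * a) * ‖x s‖ ^ 2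
            + Real.exp (2 * a * s) * (2 * inner ℝ (x s) (D s)))
          / (2 * Real.sqrt (φ s + δ ^ 2))) s := by
      have h1 := ((hφ' s hs').add_const (δ ^ 2)).sqrt (ne_of_gt (hφδ_pos s))
      exact h1
    exact (hb.sub hhs).hasDerivWithinAt
  -- nonnegativity of the derivative of F
  have hF'nonneg : ∀ s ∈ interior (Ici (0 : ℝ)),
      (0 : ℝ) ≤ C / a * (Real.exp (a * s) * a)
        - (Real.exp (2 * a * s) * (2 * a) * ‖x s‖ ^ 2
            + Real.exp (2 * a * s) * (2 * inner ℝ (x s) (D s)))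
          / (2 * Real.sqrt (φ s + δ ^ 2)) := by
    intro s hs
    rw [interior_Ici] at hs
    have hs' : (0 : ℝ) ≤ s := le_of_lt hs
    have hsq : 0 < Real.sqrt (φ s + δ ^ 2) := Real.sqrt_pos.mpr (hφδ_pos s)
    have hconst : C / a * (Real.exp (a * s) * a) = C * Real.exp (a * s) := by
      field_simp
    rw [hconst]
    rw [sub_nonneg, div_le_iff₀ (by positivity)]
    -- numerator bound: φ' ≤ 2 e^{2as} C ‖x s‖
    have hnum : Real.exp (2 * a * s) * (2 * a) * ‖x s‖ ^ 2
        + Real.exp (2 * a * s) * (2 * inner ℝ (x s) (D s))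
        ≤ 2 * Real.exp (2 * a * s) * (C * ‖x s‖) := by
      have h1 := hinner s hs'
      have h2 := mul_le_mul_of_nonneg_left h1 (Real.exp_pos (2 * a * s)).le
      nlinarith [h2]
    apply hnum.trans
    -- 2 e^{2as} C ‖x s‖ ≤ C e^{as} * (2 √(φ+δ²))
    have key : Real.exp (a * s) * ‖x s‖ ≤ Real.sqrt (φ s + δ ^ 2) := by
      have hsq2 : (Real.exp (a * s) * ‖x s‖) ^ 2 ≤ φ s + δ ^ 2 := by
        have e3 : Real.exp (a * s) * Real.exp (a * s) = Real.exp (2 * a * s) := by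
          rw [← Real.exp_add]; ring_nf
        have e4 : (Real.exp (a * s) * ‖x s‖) ^ 2 = Real.exp (2 * a * s) * ‖x s‖ ^ 2 := by
          rw [← e3]; ring
        rw [e4]
        simp only [hφ_def]
        nlinarith [sq_nonneg δ]
      calc Real.exp (a * s) * ‖x s‖
          = Real.sqrt ((Real.exp (a * s) * ‖x s‖) ^ 2) := (Real.sqrt_sq (by positivity)).symm
        _ ≤ Real.sqrt (φ s + δ ^ 2) := Real.sqrt_le_sqrt hsq2
    have e2 : Real.exp (2 * a * s) = Real.exp (a * s) * Real.exp (a * s) := by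
      rw [← Real.exp_add]; ring_nf
    calc 2 * Real.exp (2 * a * s) * (C * ‖x s‖)
        = 2 * C * Real.exp (a * s) * (Real.exp (a * s) * ‖x s‖) := by rw [e2]; ring
      _ ≤ 2 * C * Real.exp (a * s) * Real.sqrt (φ s + δ ^ 2) := by
          apply mul_le_mul_of_nonneg_left key (by positivity)
      _ = C * Real.exp (a * s) * (2 * Real.sqrt (φ s + δ ^ 2)) := by ring
  -- continuity of F on [0, ∞)
  have hFcont : ContinuousOn F (Ici 0) := by
    apply ContinuousOn.sub
    · exact (continuous_const.mul (Real.continuous_exp.comp (continuous_const.mul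
        continuous_id))).continuousOn
    · apply Real.continuous_sqrt.comp_continuousOn
      apply ContinuousOn.add _ continuousOn_const
      exact ((Real.continuous_exp.comp (continuous_const.mul continuous_id)).continuousOn).mul
        ((hxcont.norm).pow 2)
  -- monotonicity
  have hmono : MonotoneOn F (Ici 0) :=
    monotoneOn_of_hasDerivWithinAt_nonneg (convex_Ici 0) hFcont hF' hF'nonneg
  have hF0t : F 0 ≤ F t := hmono (self_mem_Ici) (mem_Ici.mpr ht) ht
  -- unfold F 0 ≤ F t
  have hφ0 : φ 0 = ‖x 0‖ ^ 2 := by simp [hφ_def]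
  have hh0 : h 0 ≤ ‖x 0‖ + δ := by
    simp only [hh_def, hφ0]
    calc Real.sqrt (‖x 0‖ ^ 2 + δ ^ 2) ≤ Real.sqrt ((‖x 0‖ + δ) ^ 2) :=
          Real.sqrt_le_sqrt (by nlinarith [norm_nonneg (x 0), hδ.le])
      _ = ‖x 0‖ + δ := Real.sqrt_sq (by positivity)
  have hht : Real.exp (a * t) * ‖x t‖ ≤ h t := by
    have hsq2 : (Real.exp (a * t) * ‖x t‖) ^ 2 ≤ φ t + δ ^ 2 := by
      have e3 : Real.exp (a * t) * Real.exp (a * t) = Real.exp (2 * a * t) := by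
        rw [← Real.exp_add]; ring_nf
      have e4 : (Real.exp (a * t) * ‖x t‖) ^ 2 = Real.exp (2 * a * t) * ‖x t‖ ^ 2 := by
        rw [← e3]; ring
      rw [e4]
      simp only [hφ_def]
      nlinarith [sq_nonneg δ]
    simp only [hh_def]
    calc Real.exp (a * t) * ‖x t‖
        = Real.sqrt ((Real.exp (a * t) * ‖x t‖) ^ 2) := (Real.sqrt_sq (by positivity)).symm
      _ ≤ Real.sqrt (φ t + δ ^ 2) := Real.sqrt_le_sqrt hsq2
  -- combine
  have hF0 : F 0 = C / a - h 0 := by simp [hF_def]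
  have hFt : F t = C / a * Real.exp (a * t) - h t := by simp only [hF_def]
  have hmain : Real.exp (a * t) * ‖x t‖
      ≤ C / a * Real.exp (a * t) - C / a + ‖x 0‖ + δ := by
    have := hF0t
    rw [hF0, hFt] at this
    linarith [hht, hh0]
  -- divide by e^{at}
  have hE : Real.exp (-(a * t)) * Real.exp (a * t) = 1 := by
    rw [← Real.exp_add]; simp
  have hle1 : Real.exp (-(a * t)) ≤ 1 := by
    apply Real.exp_le_one_iff.mpr
    nlinarith
  have hCa : 0 ≤ C / a := div_nonneg hC ha.le
  have hfinal : ‖x t‖ ≤ C / a + Real.exp (-(a * t)) * ‖x 0‖ + δ := by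
    have h1 : ‖x t‖ ≤ Real.exp (-(a * t)) * (C / a * Real.exp (a * t) - C / a + ‖x 0‖ + δ) := by
      calc ‖x t‖ = Real.exp (-(a * t)) * (Real.exp (a * t) * ‖x t‖) := by
            rw [← mul_assoc, hE, one_mul]
        _ ≤ _ := mul_le_mul_of_nonneg_left hmain (Real.exp_pos _).le
    have h2 : Real.exp (-(a * t)) * (C / a * Real.exp (a * t) - C / a + ‖x 0‖ + δ)
        = C / a - Real.exp (-(a * t)) * (C / a) + Real.exp (-(a * t)) * ‖x 0‖
          + Real.exp (-(a * t)) * δ := by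
      linear_combination (C / a) * hE
    rw [h2] at h1
    have h3 : Real.exp (-(a * t)) * δ ≤ δ := by
      nlinarith [Real.exp_pos (-(a * t))]
    have h4 : 0 ≤ Real.exp (-(a * t)) * (C / a) :=
      mul_nonneg (Real.exp_pos _).le hCa
    linarith
  -- final algebra
  have hCa_eq : C / a = (lamMax / lam2) * (Real.sqrt N * (σ + ε)) + Real.sqrt N * R / (κ * lam2) := by
    rw [hC_def, ha_def]
    field_simp
    ring
  calc ‖x t‖ ≤ C / a + Real.exp (-(a * t)) * ‖x 0‖ + δ := hfinal
    _ = Real.exp (-(κ * lam2 * t)) * ‖x 0‖ + (lamMax / lam2) * (Real.sqrt N * (σ + ε))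
        + Real.sqrt N * R / (κ * lam2) + δ := by rw [hCa_eq, ha_def]; ring
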